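/- Under the fusion data hypotheses, assume in addition that Σ_{γ∈Γ} d_γ Y_{νγ} = 0 for every ν ∈ I ∖ Γ. Then the matrix Z commutes with the matrix Y, i.e. Σ_{γ∈I} Y_{λγ} Z_{γμ} = Σ_{γ∈I} Z_{λγ} Y_{γμ} for all λ, μ ∈ I (Y-invariance of the coupling matrix Z). -/

import Mathlib

noncomputable section

/-- The coupling matrix `Z` built from the `Y`-matrix, the dimension function `d` and the
subsystem `Γ`: `Z_{λμ} = w_Γ⁻¹ ∑_{γ ∈ Γ} conj(Y_{λγ}) Y_{μγ}` if `λ, μ ∈ Γ` and `0` otherwise,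
where `w_Γ = ∑_{γ ∈ Γ} d_γ²`. -/
def Zmat {I : Type*} [DecidableEq I] (Y : I → I → ℂ) (d : I → ℝ) (Γ : Finset I) (l m : I) : ℂ :=
  if l ∈ Γ ∧ m ∈ Γ then
    ((∑ γ ∈ Γ, d γ ^ 2 : ℝ) : ℂ)⁻¹ * ∑ γ ∈ Γ, star (Y l γ) * Y m γ
  else 0

theorem stmt10
    {I : Type*} [Fintype I] [DecidableEq I] (zero : I) (bar : I → I)
    (hbar : Function.Involutive bar) (hbar0 : bar zero = zero)
    (N : I → I → I → ℕ)
    (hNsymm : ∀ l m v, N l m v = N m l v)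
    (hN0 : ∀ l v, N zero l v = if l = v then 1 else 0)
    (hFrob : ∀ l m v, N l m v = N (bar l) v m)
    (d : I → ℝ) (hdpos : ∀ l, 0 < d l) (hd0 : d zero = 1)
    (hdbar : ∀ l, d (bar l) = d l)
    (Y : I → I → ℂ)
    (hYsymm : ∀ l m, Y l m = Y m l)
    (hY0 : ∀ l, Y zero l = d l)
    (hYconj : ∀ l m, star (Y l m) = Y (bar l) m)
    (hYprod : ∀ l m r, Y l r * Y m r = (d r : ℂ) * ∑ v, (N l m v : ℂ) * Y v r)
    (Γ : Finset I) (hΓ0 : zero ∈ Γ) (hΓbar : ∀ γ ∈ Γ, bar γ ∈ Γ)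
    (hΓfus : ∀ l ∈ Γ, ∀ m ∈ Γ, ∀ v, N l m v ≠ 0 → v ∈ Γ)
    (Θ : Finset I) (hΘΓ : Θ ⊆ Γ) (hΘ0 : zero ∈ Θ) (hΘbar : ∀ θ ∈ Θ, bar θ ∈ Θ)
    (hdeg : ∀ μ ∈ Θ, ∑ γ ∈ Γ, (d γ : ℂ) * Y μ γ = ((∑ γ ∈ Γ, d γ ^ 2 : ℝ) : ℂ) * d μ)
    (hndeg : ∀ μ ∈ Γ, μ ∉ Θ → ∑ γ ∈ Γ, (d γ : ℂ) * Y μ γ = 0)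
    (hout : ∀ v : I, v ∉ Γ → ∑ γ ∈ Γ, (d γ : ℂ) * Y v γ = 0) :
    ∀ l m : I, ∑ γ : I, Y l γ * Zmat Y d Γ γ m = ∑ γ : I, Zmat Y d Γ l γ * Y γ m := by
  classical
  have hdne : ∀ x : I, (d x : ℂ) ≠ 0 := fun x =>
    Complex.ofReal_ne_zero.mpr (hdpos x).ne'
  have hwpos : (0:ℝ) < ∑ γ ∈ Γ, d γ ^ 2 :=
    Finset.sum_pos (fun i _ => pow_pos (hdpos i) 2) ⟨zero, hΓ0⟩
  set w : ℝ := ∑ γ ∈ Γ, d γ ^ 2 with hw_def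
  have hwne : (w : ℂ) ≠ 0 := Complex.ofReal_ne_zero.mpr hwpos.ne'
  -- dimensions are "multiplicative" under fusion
  have hdimR : ∀ l m : I, ∑ v, (N l m v : ℝ) * d v = d l * d m := by
    intro l m
    have h := hYprod l m zero
    simp_rw [hYsymm _ zero, hY0, hd0] at h
    push_cast at h
    rw [one_mul] at h
    exact_mod_cast h.symm
  -- Perron-Frobenius type bound  |Y l ρ| ≤ d l * d ρ
  have habs : ∀ l ρ : I, ‖Y l ρ‖ ≤ d l * d ρ := by
    intro l ρ
    obtain ⟨μ, -, hμ⟩ := Finset.exists_max_image (Finset.univ : Finset I)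
      (fun x => ‖Y x ρ‖ / d x) ⟨zero, Finset.mem_univ zero⟩
    have hbd : ∀ x, ‖Y x ρ‖ * d μ ≤ ‖Y μ ρ‖ * d x := by
      intro x
      have h : ‖Y x ρ‖ / d x ≤ ‖Y μ ρ‖ / d μ :=
        hμ x (Finset.mem_univ x)
      rwa [div_le_div_iff₀ (hdpos x) (hdpos μ)] at h
    have habspos : 0 < ‖Y μ ρ‖ := by
      have h := hbd zero
      rw [hY0, hd0, mul_one, Complex.norm_real, Real.norm_eq_abs, abs_of_pos (hdpos ρ)] at h
      exact lt_of_lt_of_le (mul_pos (hdpos ρ) (hdpos μ)) h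
    have hstep : ‖Y l ρ‖ * (‖Y μ ρ‖ * d μ)
        ≤ (d l * d ρ) * (‖Y μ ρ‖ * d μ) := by
      calc ‖Y l ρ‖ * (‖Y μ ρ‖ * d μ)
          = (d ρ * ‖∑ v, (N l μ v : ℂ) * Y v ρ‖) * d μ := by
            rw [← mul_assoc, ← norm_mul, hYprod, norm_mul, Complex.norm_real, Real.norm_eq_abs,
              abs_of_pos (hdpos ρ)]
        _ ≤ (d ρ * ∑ v, (N l μ v : ℝ) * ‖Y v ρ‖) * d μ := by
            refine mul_le_mul_of_nonneg_right
              (mul_le_mul_of_nonneg_left ?_ (hdpos ρ).le) (hdpos μ).le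
            refine le_trans (norm_sum_le _ _) (Finset.sum_le_sum fun v _ => ?_)
            rw [norm_mul, Complex.norm_natCast]
        _ = d ρ * ∑ v, (N l μ v : ℝ) * (‖Y v ρ‖ * d μ) := by
            rw [mul_assoc, Finset.sum_mul]
            congr 1
            exact Finset.sum_congr rfl fun v _ => by ring
        _ ≤ d ρ * ∑ v, (N l μ v : ℝ) * (‖Y μ ρ‖ * d v) := by
            refine mul_le_mul_of_nonneg_left
              (Finset.sum_le_sum fun v _ =>
                mul_le_mul_of_nonneg_left (hbd v) (Nat.cast_nonneg _)) (hdpos ρ).le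
        _ = (d l * d ρ) * (‖Y μ ρ‖ * d μ) := by
            have he : ∑ v, (N l μ v : ℝ) * (‖Y μ ρ‖ * d v)
                = ‖Y μ ρ‖ * ∑ v, (N l μ v : ℝ) * d v := by
              rw [Finset.mul_sum]
              exact Finset.sum_congr rfl fun v _ => by ring
            rw [he, hdimR l μ]; ring
    exact le_of_mul_le_mul_right hstep (mul_pos habspos (hdpos μ))
  -- on Θ × Γ the matrix Y degenerates: Y μ γ = d μ * d γ
  have hYΘ : ∀ μ ∈ Θ, ∀ γ ∈ Γ, Y μ γ = ((d μ * d γ : ℝ) : ℂ) := by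
    intro μ hμ γ hγ
    have hsum := hdeg μ hμ
    have hre : ∑ x ∈ Γ, d x * (Y μ x).re = w * d μ := by
      have h := congrArg Complex.re hsum
      rw [Complex.re_sum] at h
      simpa [Complex.mul_re] using h
    have hle : ∀ x ∈ Γ, d x * (Y μ x).re ≤ d μ * d x ^ 2 := by
      intro x hx
      have h1 : (Y μ x).re ≤ d μ * d x := le_trans (Complex.re_le_norm _) (habs μ x)
      nlinarith [hdpos x]
    have heq : ∑ x ∈ Γ, d x * (Y μ x).re = ∑ x ∈ Γ, d μ * d x ^ 2 := by
      rw [hre, ← Finset.mul_sum, ← hw_def]; ring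
    have hterm := (Finset.sum_eq_sum_iff_of_le hle).mp heq γ hγ
    have hre2 : (Y μ γ).re = d μ * d γ := by
      have hd := hdpos γ
      nlinarith [hterm]
    have him : (Y μ γ).im = 0 := by
      have h1 : ‖Y μ γ‖ ≤ d μ * d γ := habs μ γ
      have h2 : ‖Y μ γ‖ ^ 2
          = (Y μ γ).re * (Y μ γ).re + (Y μ γ).im * (Y μ γ).im := by
        rw [Complex.sq_norm, Complex.normSq_apply]
      have h3 : 0 ≤ ‖Y μ γ‖ := norm_nonneg _
      nlinarith [hre2]
    apply Complex.ext
    · simp [hre2]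
    · simp [him]
  -- weighted column sums of Y over Γ
  have hC : ∀ v : I, ∑ γ ∈ Γ, (d γ : ℂ) * Y v γ = if v ∈ Θ then (w:ℂ) * d v else 0 := by
    intro v
    by_cases h1 : v ∈ Θ
    · rw [if_pos h1]
      exact hdeg v h1
    · rw [if_neg h1]
      by_cases h2 : v ∈ Γ
      · exact hndeg v h2 h1
      · exact hout v h2
  -- the S-sum
  have hS : ∀ ρ m : I, ∑ γ ∈ Γ, Y ρ γ * Y m γ = (w:ℂ) * ∑ v ∈ Θ, (N ρ m v : ℂ) * d v := by
    intro ρ m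
    calc ∑ γ ∈ Γ, Y ρ γ * Y m γ
        = ∑ γ ∈ Γ, (d γ : ℂ) * ∑ v, (N ρ m v : ℂ) * Y v γ :=
          Finset.sum_congr rfl fun γ _ => hYprod ρ m γ
      _ = ∑ v, (N ρ m v : ℂ) * ∑ γ ∈ Γ, (d γ : ℂ) * Y v γ := by
          simp_rw [Finset.mul_sum]
          rw [Finset.sum_comm]
          exact Finset.sum_congr rfl fun v _ => Finset.sum_congr rfl fun γ _ => by ring
      _ = ∑ v, (if v ∈ Θ then (N ρ m v : ℂ) * ((w:ℂ) * d v) else 0) := by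
          refine Finset.sum_congr rfl fun v _ => ?_
          rw [hC v]
          by_cases h : v ∈ Θ <;> simp [h]
      _ = ∑ v ∈ Θ, (N ρ m v : ℂ) * ((w:ℂ) * d v) := by
          rw [Finset.sum_ite_mem, Finset.univ_inter]
      _ = (w:ℂ) * ∑ v ∈ Θ, (N ρ m v : ℂ) * d v := by
          rw [Finset.mul_sum]
          exact Finset.sum_congr rfl fun v _ => by ring
  -- fusion coefficients vanish outside Γ
  have hNout : ∀ a ∈ Γ, ∀ b ∈ Γ, ∀ c, c ∉ Γ → N a b c = 0 := by
    intro a ha b hb c hc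
    by_contra h
    exact hc (hΓfus a ha b hb c h)
  -- product rule for fusion sums over Γ
  have hprod_sum : ∀ a ∈ Γ, ∀ b ∈ Γ, ∀ t : I,
      ∑ ρ ∈ Γ, (N a b ρ : ℂ) * Y ρ t = (Y a t * Y b t) / d t := by
    intro a ha b hb t
    have hext : ∑ ρ ∈ Γ, (N a b ρ : ℂ) * Y ρ t = ∑ ρ, (N a b ρ : ℂ) * Y ρ t := by
      refine Finset.sum_subset (Finset.subset_univ Γ) fun ρ _ hρ => ?_
      rw [hNout a ha b hb ρ hρ]; simp
    rw [hext, eq_div_iff (hdne t), mul_comm]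
    exact (hYprod a b t).symm
  have hYbarbar : ∀ a b : I, Y (bar a) (bar b) = Y b a := by
    intro a b
    calc Y (bar a) (bar b) = star (Y a (bar b)) := (hYconj a (bar b)).symm
      _ = star (Y (bar b) a) := by rw [hYsymm]
      _ = Y (bar (bar b)) a := hYconj (bar b) a
      _ = Y b a := by rw [hbar b]
  have hstar : ∀ a b : I, star (Y a b) = Y (bar b) a := fun a b => by
    rw [hYsymm, hYconj]
  have hstar' : ∀ a b : I, star (Y a b) = Y b (bar a) := fun a b => by
    rw [hYconj, hYsymm]
  -- N-index juggling
  have hN1' : ∀ l ρ v, N l (bar ρ) v = N ρ v l := by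
    intro l ρ v
    rw [hNsymm l (bar ρ), hFrob (bar ρ) l v, hbar ρ]
  have hN1 : ∀ l ρ v, N l (bar ρ) v = N (bar v) l ρ := by
    intro l ρ v
    rw [hN1' l ρ v, hNsymm ρ v, hFrob v ρ l]
  have hN2 : ∀ ρ m v, N ρ m v = N (bar m) v ρ := by
    intro ρ m v
    rw [hNsymm ρ m, hFrob m ρ v]
  -- reduction of the left-hand side (any l, m ∈ Γ)
  have hLHS : ∀ (l : I), ∀ m ∈ Γ, ∑ γ : I, Y l γ * Zmat Y d Γ γ m
      = ∑ ρ ∈ Γ, Y m ρ * ∑ v ∈ Θ, (N l (bar ρ) v : ℂ) * d v := by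
    intro l m hm
    calc ∑ γ : I, Y l γ * Zmat Y d Γ γ m
        = ∑ γ ∈ Γ, Y l γ * ((w:ℂ)⁻¹ * ∑ ρ ∈ Γ, Y (bar ρ) γ * Y m ρ) := by
          rw [← Finset.sum_subset (Finset.subset_univ Γ) (fun γ _ hγ => by
            simp [Zmat, hγ])]
          refine Finset.sum_congr rfl fun γ hγ => ?_
          have hz : Zmat Y d Γ γ m = (w:ℂ)⁻¹ * ∑ ρ ∈ Γ, Y (bar ρ) γ * Y m ρ := by
            rw [Zmat, if_pos ⟨hγ, hm⟩, ← hw_def]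
            congr 1
            exact Finset.sum_congr rfl fun ρ _ => by rw [hstar]
          rw [hz]
      _ = (w:ℂ)⁻¹ * ∑ ρ ∈ Γ, Y m ρ * ∑ γ ∈ Γ, Y l γ * Y (bar ρ) γ := by
          simp_rw [Finset.mul_sum]
          rw [Finset.sum_comm]
          exact Finset.sum_congr rfl fun ρ _ => Finset.sum_congr rfl fun γ _ => by ring
      _ = (w:ℂ)⁻¹ * ∑ ρ ∈ Γ, Y m ρ * ((w:ℂ) * ∑ v ∈ Θ, (N l (bar ρ) v : ℂ) * d v) := by
          congr 1
          exact Finset.sum_congr rfl fun ρ _ => by rw [hS l (bar ρ)]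
      _ = ∑ ρ ∈ Γ, Y m ρ * ∑ v ∈ Θ, (N l (bar ρ) v : ℂ) * d v := by
          rw [show ∑ ρ ∈ Γ, Y m ρ * ((w:ℂ) * ∑ v ∈ Θ, (N l (bar ρ) v : ℂ) * d v)
              = (w:ℂ) * ∑ ρ ∈ Γ, Y m ρ * ∑ v ∈ Θ, (N l (bar ρ) v : ℂ) * d v from by
            rw [Finset.mul_sum]; exact Finset.sum_congr rfl fun ρ _ => by ring]
          rw [← mul_assoc, inv_mul_cancel₀ hwne, one_mul]
  -- reduction of the right-hand side (l ∈ Γ, any m)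
  have hRHS : ∀ l ∈ Γ, ∀ m : I, ∑ γ : I, Zmat Y d Γ l γ * Y γ m
      = ∑ ρ ∈ Γ, Y ρ (bar l) * ∑ v ∈ Θ, (N ρ m v : ℂ) * d v := by
    intro l hl m
    calc ∑ γ : I, Zmat Y d Γ l γ * Y γ m
        = ∑ γ ∈ Γ, ((w:ℂ)⁻¹ * ∑ ρ ∈ Γ, Y ρ (bar l) * Y γ ρ) * Y γ m := by
          rw [← Finset.sum_subset (Finset.subset_univ Γ) (fun γ _ hγ => by
            simp [Zmat, hγ])]
          refine Finset.sum_congr rfl fun γ hγ => ?_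
          have hz : Zmat Y d Γ l γ = (w:ℂ)⁻¹ * ∑ ρ ∈ Γ, Y ρ (bar l) * Y γ ρ := by
            rw [Zmat, if_pos ⟨hl, hγ⟩, ← hw_def]
            congr 1
            exact Finset.sum_congr rfl fun ρ _ => by rw [hstar']
          rw [hz]
      _ = (w:ℂ)⁻¹ * ∑ ρ ∈ Γ, Y ρ (bar l) * ∑ γ ∈ Γ, Y ρ γ * Y m γ := by
          simp_rw [Finset.mul_sum, Finset.sum_mul]
          rw [Finset.sum_comm]
          refine Finset.sum_congr rfl fun ρ _ => Finset.sum_congr rfl fun γ _ => ?_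
          rw [hYsymm γ ρ, hYsymm γ m]
          ring
      _ = (w:ℂ)⁻¹ * ∑ ρ ∈ Γ, Y ρ (bar l) * ((w:ℂ) * ∑ v ∈ Θ, (N ρ m v : ℂ) * d v) := by
          congr 1
          exact Finset.sum_congr rfl fun ρ _ => by rw [hS ρ m]
      _ = ∑ ρ ∈ Γ, Y ρ (bar l) * ∑ v ∈ Θ, (N ρ m v : ℂ) * d v := by
          rw [show ∑ ρ ∈ Γ, Y ρ (bar l) * ((w:ℂ) * ∑ v ∈ Θ, (N ρ m v : ℂ) * d v)
              = (w:ℂ) * ∑ ρ ∈ Γ, Y ρ (bar l) * ∑ v ∈ Θ, (N ρ m v : ℂ) * d v from by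
            rw [Finset.mul_sum]; exact Finset.sum_congr rfl fun ρ _ => by ring]
          rw [← mul_assoc, inv_mul_cancel₀ hwne, one_mul]
  -- evaluation on Γ × Γ
  have hLval : ∀ l ∈ Γ, ∀ m ∈ Γ, ∑ γ : I, Y l γ * Zmat Y d Γ γ m
      = (∑ v ∈ Θ, (d v : ℂ) * d v) * Y l m := by
    intro l hl m hm
    rw [hLHS l m hm]
    have h1 : ∀ ρ ∈ Γ, Y m ρ * ∑ v ∈ Θ, (N l (bar ρ) v : ℂ) * d v
        = ∑ v ∈ Θ, (d v : ℂ) * ((N (bar v) l ρ : ℂ) * Y ρ m) := by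
      intro ρ _
      rw [Finset.mul_sum]
      refine Finset.sum_congr rfl fun v _ => ?_
      rw [hN1 l ρ v, hYsymm m ρ]
      ring
    rw [Finset.sum_congr rfl h1, Finset.sum_comm]
    have h2 : ∀ v ∈ Θ, ∑ ρ ∈ Γ, (d v : ℂ) * ((N (bar v) l ρ : ℂ) * Y ρ m)
        = (d v : ℂ) * (d v : ℂ) * Y l m := by
      intro v hv
      rw [← Finset.mul_sum, hprod_sum (bar v) (hΘΓ (hΘbar v hv)) l hl m,
        hYΘ (bar v) (hΘbar v hv) m hm, hdbar]
      push_cast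
      field_simp [hdne m]
    rw [Finset.sum_congr rfl h2, Finset.sum_mul]
  have hRval : ∀ l ∈ Γ, ∀ m ∈ Γ, ∑ γ : I, Zmat Y d Γ l γ * Y γ m
      = (∑ v ∈ Θ, (d v : ℂ) * d v) * Y l m := by
    intro l hl m hm
    rw [hRHS l hl m]
    have h1 : ∀ ρ ∈ Γ, Y ρ (bar l) * ∑ v ∈ Θ, (N ρ m v : ℂ) * d v
        = ∑ v ∈ Θ, (d v : ℂ) * ((N (bar m) v ρ : ℂ) * Y ρ (bar l)) := by
      intro ρ _
      rw [Finset.mul_sum]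
      exact Finset.sum_congr rfl fun v _ => by rw [hN2 ρ m v]; ring
    rw [Finset.sum_congr rfl h1, Finset.sum_comm]
    have h2 : ∀ v ∈ Θ, ∑ ρ ∈ Γ, (d v : ℂ) * ((N (bar m) v ρ : ℂ) * Y ρ (bar l))
        = (d v : ℂ) * (d v : ℂ) * Y l m := by
      intro v hv
      rw [← Finset.mul_sum, hprod_sum (bar m) (hΓbar m hm) v (hΘΓ hv) (bar l),
        hYΘ v hv (bar l) (hΓbar l hl), hYbarbar m l, hdbar]
      push_cast
      field_simp [hdne l]
    rw [Finset.sum_congr rfl h2, Finset.sum_mul]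
  -- vanishing outside Γ
  have hL0 : ∀ l, l ∉ Γ → ∀ m ∈ Γ, ∑ γ : I, Y l γ * Zmat Y d Γ γ m = 0 := by
    intro l hl m hm
    rw [hLHS l m hm]
    refine Finset.sum_eq_zero fun ρ hρ => ?_
    have hz : ∑ v ∈ Θ, (N l (bar ρ) v : ℂ) * d v = 0 := by
      refine Finset.sum_eq_zero fun v hv => ?_
      rw [hN1' l ρ v, hNout ρ hρ v (hΘΓ hv) l hl]
      simp
    rw [hz, mul_zero]
  have hR0 : ∀ l ∈ Γ, ∀ m, m ∉ Γ → ∑ γ : I, Zmat Y d Γ l γ * Y γ m = 0 := by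
    intro l hl m hm
    rw [hRHS l hl m]
    refine Finset.sum_eq_zero fun ρ hρ => ?_
    have hz : ∑ v ∈ Θ, (N ρ m v : ℂ) * d v = 0 := by
      refine Finset.sum_eq_zero fun v hv => ?_
      rw [hFrob ρ m v, hNout (bar ρ) (hΓbar ρ hρ) v (hΘΓ hv) m hm]
      simp
    rw [hz, mul_zero]
  -- putting everything together
  intro l m
  by_cases hl : l ∈ Γ
  · by_cases hm : m ∈ Γ
    · rw [hLval l hl m hm, hRval l hl m hm]
    · have hz : ∀ γ : I, Zmat Y d Γ γ m = 0 := fun γ => by simp [Zmat, hm]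
      rw [hR0 l hl m hm]
      simp [hz]
  · by_cases hm : m ∈ Γ
    · have hz : ∀ γ : I, Zmat Y d Γ l γ = 0 := fun γ => by simp [Zmat, hl]
      rw [hL0 l hl m hm]
      simp [hz]
    · have hz1 : ∀ γ : I, Zmat Y d Γ γ m = 0 := fun γ => by simp [Zmat, hm]
      have hz2 : ∀ γ : I, Zmat Y d Γ l γ = 0 := fun γ => by simp [Zmat, hl]
      simp [hz1, hz2]
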